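/- Every indecomposable permutation in S_n (n ≥ 2) avoiding both 231 and 321 equals the permutation n 1 2 ... (n-1). -/

import Mathlib

open Finset
open scoped Classical

/-- Number of components of a permutation of `Fin n` (0-based version of
`|{i ∈ [n] : π(j) ≤ i for all j ≤ i}|`). -/
def comps {n : ℕ} (π : Equiv.Perm (Fin n)) : ℕ :=
  (Finset.univ.filter fun i : Fin n => ∀ j, j ≤ i → π j ≤ i).card

/-- Number of descents. -/
def des {n : ℕ} (π : Equiv.Perm (Fin n)) : ℕ :=
  (Finset.univ.filter fun i : Fin n =>
    ∃ h : (i : ℕ) + 1 < n, π ⟨(i : ℕ) + 1, h⟩ < π i).card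

/-- Length of the initial ascending run: `min(DES(π) ∪ {n})` with 1-based descent positions. -/
noncomputable def iar {n : ℕ} (π : Equiv.Perm (Fin n)) : ℕ :=
  sInf {k : ℕ | k = n ∨ 0 < k ∧ ∃ h : k < n, π ⟨k, h⟩ < π ⟨k - 1, by omega⟩}

/-- `π` contains the pattern `σ`. -/
def ContainsPat {n m : ℕ} (π : Equiv.Perm (Fin n)) (σ : Equiv.Perm (Fin m)) : Prop :=
  ∃ f : Fin m → Fin n, StrictMono f ∧ ∀ a b : Fin m, σ a < σ b ↔ π (f a) < π (f b)

/-- `π` avoids the pattern `σ`. -/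
def AvoidsPat {n m : ℕ} (π : Equiv.Perm (Fin n)) (σ : Equiv.Perm (Fin m)) : Prop :=
  ¬ ContainsPat π σ

def pat123 : Equiv.Perm (Fin 3) := ⟨![0, 1, 2], ![0, 1, 2], by decide, by decide⟩
def pat132 : Equiv.Perm (Fin 3) := ⟨![0, 2, 1], ![0, 2, 1], by decide, by decide⟩
def pat213 : Equiv.Perm (Fin 3) := ⟨![1, 0, 2], ![1, 0, 2], by decide, by decide⟩
def pat231 : Equiv.Perm (Fin 3) := ⟨![1, 2, 0], ![2, 0, 1], by decide, by decide⟩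
def pat312 : Equiv.Perm (Fin 3) := ⟨![2, 0, 1], ![1, 2, 0], by decide, by decide⟩
def pat321 : Equiv.Perm (Fin 3) := ⟨![2, 1, 0], ![2, 1, 0], by decide, by decide⟩

/-- Direct sum of two permutations. -/
def directSum {m l : ℕ} (π : Equiv.Perm (Fin m)) (σ : Equiv.Perm (Fin l)) :
    Equiv.Perm (Fin (m + l)) :=
  finSumFinEquiv.permCongr (Equiv.sumCongr π σ)

/-- Direct sum of a finite family of permutations. -/
def dsum : {k : ℕ} → (a : Fin k → ℕ) → ((i : Fin k) → Equiv.Perm (Fin (a i))) →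
    Equiv.Perm (Fin (∑ i, a i))
  | 0, _, _ => Equiv.refl _
  | _ + 1, a, τ =>
      (finCongr (Fin.sum_univ_succ a).symm).permCongr
        (directSum (τ 0) (dsum (fun i => a i.succ) (fun i => τ i.succ)))

/-- Set of values of left-to-right maxima. -/
noncomputable def LMAX {n : ℕ} (π : Equiv.Perm (Fin n)) : Finset (Fin n) :=
  Finset.univ.filter fun v => ∃ i, π i = v ∧ ∀ j, j < i → π j < v

/-- Set of values of left-to-right minima. -/
noncomputable def LMIN {n : ℕ} (π : Equiv.Perm (Fin n)) : Finset (Fin n) :=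
  Finset.univ.filter fun v => ∃ i, π i = v ∧ ∀ j, j < i → v < π j

/-- Set of descent bottoms. -/
noncomputable def DESB {n : ℕ} (π : Equiv.Perm (Fin n)) : Finset (Fin n) :=
  Finset.univ.filter fun v => ∃ i : ℕ, ∃ h : i + 1 < n,
    π ⟨i + 1, h⟩ = v ∧ π ⟨i + 1, h⟩ < π ⟨i, by omega⟩

/-- A permutation of `[n]` is indecomposable iff there is no `1 ≤ i < n` with
`π(j) ≤ i` for all `j ≤ i` (1-based; 0-based below). -/
def IndecompN {n : ℕ} (π : Equiv.Perm (Fin n)) : Prop :=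
  ¬ ∃ i : ℕ, 1 ≤ i ∧ i < n ∧ ∀ j : Fin n, (j : ℕ) < i → (π j : ℕ) < i

set_option maxRecDepth 10000 in
lemma two_bigger {n : ℕ} (π : Equiv.Perm (Fin n)) (i j k : Fin n) (hij : i < j) (hjk : j < k)
    (hi : π k < π i) (hj : π k < π j) : ContainsPat π pat231 ∨ ContainsPat π pat321 := by
  have e2 : (⟨2, by omega⟩ : Fin 3) = 2 := rfl
  have hi' : (π k : ℕ) < π i := hi
  have hj' : (π k : ℕ) < π j := hj
  have hmono : StrictMono ![i, j, k] := by
    intro a b hab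
    fin_cases a <;> fin_cases b <;>
      simp only [e2, Fin.mk_lt_mk, Fin.mk_zero, Fin.mk_one, Matrix.cons_val_zero,
        Matrix.cons_val_one, Matrix.head_cons, Matrix.cons_val_two, Matrix.tail_cons] at hab ⊢ <;>
      first
        | exact absurd hab (by decide)
        | exact hij
        | exact hjk
        | exact hij.trans hjk
  rcases lt_or_gt_of_ne (fun h : π i = π j => absurd (π.injective h) hij.ne) with h | h
  · left
    refine ⟨![i, j, k], hmono, ?_⟩
    have h' : (π i : ℕ) < π j := h
    intro a b
    fin_cases a <;> fin_cases b <;>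
      simp only [e2, Fin.mk_zero, Fin.mk_one, Matrix.cons_val_zero, Matrix.cons_val_one,
        Matrix.head_cons, Matrix.cons_val_two, Matrix.tail_cons] <;>
      first
        | exact iff_of_true (by decide) (by rw [Fin.lt_def]; omega)
        | exact iff_of_false (by decide) (by rw [Fin.lt_def]; omega)
  · right
    refine ⟨![i, j, k], hmono, ?_⟩
    have h' : (π j : ℕ) < π i := h
    intro a b
    fin_cases a <;> fin_cases b <;>
      simp only [e2, Fin.mk_zero, Fin.mk_one, Matrix.cons_val_zero, Matrix.cons_val_one,
        Matrix.head_cons, Matrix.cons_val_two, Matrix.tail_cons] <;>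
      first
        | exact iff_of_true (by decide) (by rw [Fin.lt_def]; omega)
        | exact iff_of_false (by decide) (by rw [Fin.lt_def]; omega)

set_option maxRecDepth 10000 in
lemma le_succ_apply {n : ℕ} (π : Equiv.Perm (Fin n))
    (h1 : AvoidsPat π pat231) (h2 : AvoidsPat π pat321) (k : Fin n) :
    (k : ℕ) ≤ (π k : ℕ) + 1 := by
  by_contra hc
  push_neg at hc
  classical
  set S : Finset (Fin n) := (Finset.Iio k).filter (fun j => ¬ π j < π k) with hS
  have hsmall : ((Finset.Iio k).filter (fun j => π j < π k)).card ≤ (π k : ℕ) := by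
    calc ((Finset.Iio k).filter (fun j => π j < π k)).card
        ≤ (Finset.Iio (π k)).card := by
          apply Finset.card_le_card_of_injOn (fun j => π j)
          · intro j hj
            simp only [Finset.mem_filter, Finset.mem_Iio] at hj ⊢
            exact Finset.mem_coe.mpr (Finset.mem_Iio.mpr (Finset.mem_filter.mp hj).2)
          · exact π.injective.injOn
      _ = (π k : ℕ) := Fin.card_Iio _
  have hcards : ((Finset.Iio k).filter (fun j => π j < π k)).card + S.card
      = (Finset.Iio k).card := Finset.card_filter_add_card_filter_not _
  have hIio : (Finset.Iio k).card = (k : ℕ) := Fin.card_Iio _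
  have h2card : 1 < S.card := by omega
  obtain ⟨a, ha, b, hb, hab⟩ := Finset.one_lt_card.mp h2card
  simp only [hS, Finset.mem_filter, Finset.mem_Iio, not_lt] at ha hb
  have hka : π k < π a := lt_of_le_of_ne ha.2 (fun h => absurd (π.injective h) (ne_of_gt ha.1))
  have hkb : π k < π b := lt_of_le_of_ne hb.2 (fun h => absurd (π.injective h) (ne_of_gt hb.1))
  rcases lt_or_gt_of_ne hab with h | h
  · rcases two_bigger π a b k h hb.1 hka hkb with hcc | hcc
    exacts [h1 hcc, h2 hcc]
  · rcases two_bigger π b a k h ha.1 hkb hka with hcc | hcc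
    exacts [h1 hcc, h2 hcc]



/-- every indecomposable (231,321)-avoiding permutation of `[n]`, `n ≥ 2`,
equals `n 1 2 ⋯ (n-1)`, i.e. `(finRotate n)⁻¹`. -/
theorem indecomp_avoid_231_321 (n : ℕ) (hn : 2 ≤ n) (π : Equiv.Perm (Fin n))
    (h1 : AvoidsPat π pat231) (h2 : AvoidsPat π pat321) (hind : IndecompN π) :
    π = (finRotate n)⁻¹ := by
  classical
  obtain ⟨m, rfl⟩ : ∃ m, n = m + 1 := ⟨n - 1, by omega⟩
  have hm : 1 ≤ m := by omega
  have key : ∀ k : Fin (m + 1), (k : ℕ) ≤ (π k : ℕ) + 1 := le_succ_apply π h1 h2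
  -- Step 1: π 0 = m
  have h0 : (π 0 : ℕ) = m := by
    by_contra hcon
    set M : ℕ := (π 0 : ℕ) with hM
    have hMm : M < m := lt_of_le_of_ne (by omega) hcon
    set x : Fin (m + 1) := ⟨M, by omega⟩ with hx
    have hxval : (x : ℕ) = M := rfl
    have himg : (Finset.Iic x).image π.symm = Finset.Iic x := by
      apply Finset.eq_of_subset_of_card_le
      · intro p hp
        simp only [Finset.mem_image, Finset.mem_Iic] at hp ⊢
        obtain ⟨v, hv, rfl⟩ := hp
        rw [Fin.le_def] at hv ⊢
        rw [hxval] at hv ⊢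
        by_cases hp0 : π.symm v = 0
        · rw [hp0]; simp
        · have hkey := key (π.symm v)
          rw [Equiv.apply_symm_apply] at hkey
          have hne : (π.symm v : ℕ) ≠ M + 1 := by
            intro hMe
            have hvM : (v : ℕ) = M := by omega
            have hv0 : v = π 0 := Fin.ext (by omega)
            rw [hv0, Equiv.symm_apply_apply] at hMe
            simp only [Fin.val_zero] at hMe
            omega
          omega
      · rw [Finset.card_image_of_injective _ π.symm.injective]
    exfalso
    apply hind
    refine ⟨M + 1, by omega, by omega, fun j hj => ?_⟩
    have hjmem : j ∈ Finset.Iic x := Finset.mem_Iic.mpr (Fin.le_def.mpr (by rw [hxval]; omega))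
    rw [← himg] at hjmem
    obtain ⟨v, hv, hvj⟩ := Finset.mem_image.mp hjmem
    have hjv : π j = v := by rw [← hvj, Equiv.apply_symm_apply]
    rw [hjv]
    have := Finset.mem_Iic.mp hv
    rw [Fin.le_def, hxval] at this
    omega
  -- Step 2: for 0 < c, π ⟨c⟩ = c - 1
  have hstep : ∀ c : ℕ, 0 < c → ∀ (hcm : c < m + 1), (π ⟨c, hcm⟩ : ℕ) = c - 1 := by
    intro c
    induction c using Nat.strong_induction_on with
    | _ c ih =>
      intro hc hcm
      by_contra hne
      have hkc := key ⟨c, hcm⟩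
      have hcv : ((⟨c, hcm⟩ : Fin (m + 1)) : ℕ) = c := rfl
      rw [hcv] at hkc
      have hge : c ≤ (π ⟨c, hcm⟩ : ℕ) := by omega
      set v : Fin (m + 1) := ⟨c - 1, by omega⟩ with hv
      have hvv : (v : ℕ) = c - 1 := rfl
      set p : Fin (m + 1) := π.symm v with hp
      have hπp : π p = v := Equiv.apply_symm_apply π v
      have hπpv : (π p : ℕ) = c - 1 := by rw [hπp]
      have hp0 : (p : ℕ) ≠ 0 := by
        intro h
        have hpe : p = 0 := Fin.ext h
        rw [hpe] at hπp
        have : (π 0 : ℕ) = c - 1 := by rw [hπp]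
        omega
      have hkeyp := key p
      have hpc : (p : ℕ) ≠ c := by
        intro h
        have hpe : p = ⟨c, hcm⟩ := Fin.ext h
        rw [hpe] at hπpv
        omega
      have hplt : (p : ℕ) < c := by omega
      have hih := ih (p : ℕ) hplt (by omega) p.isLt
      have hpeq : (⟨(p : ℕ), p.isLt⟩ : Fin (m + 1)) = p := rfl
      rw [hpeq] at hih
      omega
  -- Conclusion
  apply Equiv.ext
  intro k
  rw [Equiv.Perm.eq_inv_iff_eq, finRotate_succ_apply]
  apply Fin.ext
  rw [Fin.val_add_one]
  by_cases hk : (k : ℕ) = 0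
  · have hπlast : π k = Fin.last m := by
      have hk0 : k = 0 := Fin.ext hk
      exact Fin.ext (by rw [hk0]; simpa using h0)
    rw [if_pos hπlast, hk]
  · have hc := hstep (k : ℕ) (by omega) k.isLt
    have hek : (⟨(k : ℕ), k.isLt⟩ : Fin (m + 1)) = k := rfl
    rw [hek] at hc
    have hne : π k ≠ Fin.last m := by
      intro h
      rw [h] at hc
      simp only [Fin.val_last] at hc
      have := k.isLt
      omega
    rw [if_neg hne]
    omega
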